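/- Let p ≤ 3 and q be distinct primes. There is no subset J ⊆ Z/(pq) with 0 ∈ J, -J ⊆ J, such that: J mod q is invariant under translation by 1, J mod p is not invariant under translation by 1, and J is not invariant under translation by p. -/
import Mathlib


/-- Remark 3.9: for `p ≤ 3`, there is no indexing set `J ⊆ Z/pq`
realizing the saturated transfer system with unique non-trivial relation
`{0} → C_q`. -/
theorem stmt5 (p q : ℕ) (hp : p.Prime) (hq : q.Prime) (hp3 : p ≤ 3) (hpq : p ≠ q) :
    ¬ ∃ J : Set (ZMod (p * q)),
      (0 : ZMod (p * q)) ∈ J ∧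
      (∀ x ∈ J, -x ∈ J) ∧
      (fun x => x + 1) '' ((ZMod.castHom (dvd_mul_left q p) (ZMod q)) '' J)
        = (ZMod.castHom (dvd_mul_left q p) (ZMod q)) '' J ∧
      ¬ ((fun x => x + 1) '' ((ZMod.castHom (dvd_mul_right p q) (ZMod p)) '' J)
        = (ZMod.castHom (dvd_mul_right p q) (ZMod p)) '' J) ∧
      ¬ ((fun x => x + ((p : ℕ) : ZMod (p * q))) '' J = J) := by
  rintro ⟨J, h0, hsym, hq1, hp1, hpJ⟩
  set πp := ZMod.castHom (dvd_mul_right p q) (ZMod p) with hπp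
  set πq := ZMod.castHom (dvd_mul_left q p) (ZMod q) with hπq
  have hco : Nat.Coprime p q := (Nat.coprime_primes hp hq).mpr hpq
  haveI : NeZero (p * q) := ⟨Nat.mul_ne_zero hp.pos.ne' hq.pos.ne'⟩
  haveI : NeZero q := ⟨hq.pos.ne'⟩
  -- injectivity from CRT
  have hinj : ∀ x y : ZMod (p * q), πp x = πp y → πq x = πq y → x = y := by
    intro x y hxp hxq
    have hd : ∀ d : ZMod (p * q), πp d = 0 → πq d = 0 → d = 0 := by
      intro d hdp hdq
      have hval : d = ((d.val : ℕ) : ZMod (p * q)) := (ZMod.natCast_zmod_val d).symm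
      rw [hval, map_natCast] at hdp hdq
      have h1 : p ∣ d.val := (ZMod.natCast_eq_zero_iff _ _).mp hdp
      have h2 : q ∣ d.val := (ZMod.natCast_eq_zero_iff _ _).mp hdq
      have h3 : p * q ∣ d.val := hco.mul_dvd_of_dvd_of_dvd h1 h2
      have h5 : d.val = 0 := Nat.eq_zero_of_dvd_of_lt h3 (ZMod.val_lt d)
      rw [hval, h5, Nat.cast_zero]
    have := hd (x - y) (by rw [map_sub, hxp, sub_self]) (by rw [map_sub, hxq, sub_self])
    exact sub_eq_zero.mp this
  -- Step A: πq '' J = univ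
  have hA : ∀ a : ZMod q, a ∈ πq '' J := by
    have hnat : ∀ n : ℕ, ((n : ZMod q)) ∈ πq '' J := by
      intro n
      induction n with
      | zero => refine ⟨0, h0, ?_⟩; simp
      | succ n ih =>
        rw [← hq1]
        exact ⟨(n : ZMod q), ih, by push_cast; ring⟩
    intro a
    have : ((a.val : ℕ) : ZMod q) = a := ZMod.natCast_zmod_val a
    rw [← this]; exact hnat a.val
  -- Step B: every element of J maps to 0 mod p
  have hB : ∀ x ∈ J, πp x = 0 := by
    by_contra hB
    push_neg at hB
    obtain ⟨x, hxJ, hx0⟩ := hB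
    apply hp1
    have huniv : πp '' J = Set.univ := by
      have h0' : (0 : ZMod p) ∈ πp '' J := ⟨0, h0, map_zero _⟩
      have hx' : πp x ∈ πp '' J := ⟨x, hxJ, rfl⟩
      have hnx' : -πp x ∈ πp '' J := ⟨-x, hsym x hxJ, map_neg _ _⟩
      interval_cases p
      · exact absurd hp Nat.not_prime_zero
      · exact absurd hp Nat.not_prime_one
      · -- p = 2
        ext a
        simp only [Set.mem_univ, iff_true]
        have h2 : ∀ b : ZMod 2, b ≠ 0 → b = 1 := by decide
        have ha : ∀ b : ZMod 2, b = 0 ∨ b = 1 := by decide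
        rcases ha a with h | h
        · rw [h]; exact h0'
        · rw [h, ← h2 _ hx0]; exact hx'
      · -- p = 3
        ext a
        simp only [Set.mem_univ, iff_true]
        have h3 : ∀ b : ZMod 3, b ≠ 0 → (b = 1 ∧ -b = 2) ∨ (b = 2 ∧ -b = 1) := by decide
        have ha : ∀ b : ZMod 3, b = 0 ∨ b = 1 ∨ b = 2 := by decide
        have h12 : (1 : ZMod 3) ∈ πp '' J ∧ (2 : ZMod 3) ∈ πp '' J := by
          rcases h3 _ hx0 with ⟨e1, e2⟩ | ⟨e1, e2⟩
          · exact ⟨e1 ▸ hx', e2 ▸ hnx'⟩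
          · exact ⟨e2 ▸ hnx', e1 ▸ hx'⟩
        rcases ha a with h | h | h <;> rw [h]
        · exact h0'
        · exact h12.1
        · exact h12.2
    rw [huniv]
    ext a
    simp only [Set.image_univ, Set.mem_range, Set.mem_univ, iff_true]
    exact ⟨a - 1, by ring⟩
  -- Step C: J = kernel of πp
  have hC : J = {x : ZMod (p * q) | πp x = 0} := by
    apply Set.Subset.antisymm
    · intro x hx; exact hB x hx
    · intro x hx
      obtain ⟨y, hyJ, hy⟩ := hA (πq x)
      have : y = x := hinj y x (by rw [hB y hyJ, hx]) hy
      rwa [← this]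
  -- Step D: contradiction with hpJ
  apply hpJ
  have hpp : πp ((p : ℕ) : ZMod (p * q)) = 0 := by
    rw [map_natCast, ZMod.natCast_self]
  ext y
  constructor
  · rintro ⟨x, hxJ, rfl⟩
    rw [hC] at hxJ ⊢
    simp only [Set.mem_setOf_eq] at *
    rw [map_add, hxJ, hpp, add_zero]
  · intro hy
    refine ⟨y - ((p : ℕ) : ZMod (p * q)), ?_, by simp⟩
    rw [hC] at hy ⊢
    simp only [Set.mem_setOf_eq] at *
    rw [map_sub, hy, hpp, sub_zero]
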